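/- If F = (X; f₁,…,f_N) is a point-fibred IFS on a compact Hausdorff space X, then the induced map F : K(X) → K(X), B ↦ ⋃_{i=1}^N f_i(B), has a unique fixed point A ∈ K(X). -/

import Mathlib

open Set Topology Filter

/-- `seqComp f σ k` is the composition `f_{σ|k} = f_{σ₁} ∘ f_{σ₂} ∘ ⋯ ∘ f_{σ_k}`
(with the sequence `σ` indexed from `0`). -/
def seqComp {X : Type*} {N : ℕ} (f : Fin N → X → X) (σ : ℕ → Fin N) : ℕ → X → X
  | 0 => id
  | k + 1 => seqComp f σ k ∘ f (σ k)

/-- `PiMap f σ = ⋂_{k ≥ 1} f_{σ₁} ∘ ⋯ ∘ f_{σ_k}(X)`. -/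
def PiMap {X : Type*} {N : ℕ} (f : Fin N → X → X) (σ : ℕ → Fin N) : Set X :=
  ⋂ k : ℕ, seqComp f σ (k + 1) '' Set.univ

section Aux

variable {X : Type*} {N : ℕ} (f : Fin N → X → X)

lemma seqComp_congr {σ τ : ℕ → Fin N} (n : ℕ) (h : ∀ i < n, σ i = τ i) :
    seqComp f σ n = seqComp f τ n := by
  induction n with
  | zero => rfl
  | succ k ih =>
    show seqComp f σ k ∘ f (σ k) = seqComp f τ k ∘ f (τ k)
    rw [ih (fun i hi => h i (Nat.lt_succ_of_lt hi)), h k (Nat.lt_succ_self k)]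

lemma seqComp_shift (σ : ℕ → Fin N) (k : ℕ) :
    seqComp f σ (k+1) = f (σ 0) ∘ seqComp f (fun n => σ (n+1)) k := by
  induction k with
  | zero => rfl
  | succ k ih =>
    show seqComp f σ (k+1) ∘ f (σ (k+1)) = _
    rw [ih]
    rfl

lemma seqComp_continuous [TopologicalSpace X] (hf : ∀ i, Continuous (f i)) (σ : ℕ → Fin N)
    (n : ℕ) : Continuous (seqComp f σ n) := by
  induction n with
  | zero => exact continuous_id
  | succ k ih => exact ih.comp (hf _)

lemma iterate_hutch_eq (hN : 0 < N) (n : ℕ) (S : Set X) :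
    (fun B => ⋃ i, f i '' B)^[n] S = ⋃ σ : ℕ → Fin N, seqComp f σ n '' S := by
  haveI : Nonempty (Fin N) := ⟨⟨0, hN⟩⟩
  induction n generalizing S with
  | zero =>
    show S = ⋃ _ : ℕ → Fin N, id '' S
    simp [Set.iUnion_const]
  | succ n ih =>
    rw [Function.iterate_succ_apply, ih]
    ext x
    simp only [mem_iUnion, Set.image_iUnion]
    constructor
    · rintro ⟨σ, i, hx⟩
      refine ⟨Function.update σ n i, ?_⟩
      have h1 : seqComp f (Function.update σ n i) (n+1)
          = seqComp f σ n ∘ f i := by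
        show seqComp f (Function.update σ n i) n ∘ f (Function.update σ n i n) = _
        rw [Function.update_self,
          seqComp_congr f n (fun j hj => Function.update_of_ne (Nat.ne_of_lt hj) _ _)]
      rw [h1, Set.image_comp]
      exact hx
    · rintro ⟨σ, hx⟩
      refine ⟨σ, σ n, ?_⟩
      rw [show seqComp f σ (n+1) = seqComp f σ n ∘ f (σ n) from rfl, Set.image_comp] at hx
      exact hx

end Aux

/-- If `F` is a point-fibred IFS on a compact Hausdorff space `X`, then
the induced map `B ↦ ⋃ᵢ fᵢ(B)` on the nonempty compact subsets of `X` has a unique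
fixed point. -/
theorem hutchinson_existsUnique_fixedPoint
    {X : Type*} [TopologicalSpace X] [CompactSpace X] [T2Space X] [Nonempty X]
    {N : ℕ} (hN : 0 < N) (f : Fin N → X → X) (hf : ∀ i, Continuous (f i))
    (hpf : ∀ σ : ℕ → Fin N, ∃ x : X, PiMap f σ = {x}) :
    ∃! A : Set X, (A.Nonempty ∧ IsCompact A) ∧ (⋃ i, f i '' A) = A := by
  haveI : Nonempty (Fin N) := ⟨⟨0, hN⟩⟩
  set F : Set X → Set X := fun B => ⋃ i, f i '' B with hF
  set A : Set X := ⋂ k, F^[k] univ with hA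
  -- basic facts
  have hFmono : Monotone F := fun S T h =>
    Set.iUnion_mono fun i => Set.image_mono h
  have hKcompact : ∀ k, IsCompact (F^[k] univ) := by
    intro k
    induction k with
    | zero => exact isCompact_univ
    | succ k ih =>
      rw [Function.iterate_succ_apply']
      exact isCompact_iUnion fun i => ih.image (hf i)
  have hseq_compact : ∀ (σ : ℕ → Fin N) (n : ℕ), IsCompact (seqComp f σ n '' univ) :=
    fun σ n => isCompact_univ.image (seqComp_continuous f hf σ n)
  have hseq_anti : ∀ (σ : ℕ → Fin N) (k : ℕ),
      seqComp f σ (k+1) '' univ ⊆ seqComp f σ k '' univ := by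
    intro σ k
    rw [show seqComp f σ (k+1) = seqComp f σ k ∘ f (σ k) from rfl, Set.image_comp]
    exact Set.image_mono (subset_univ _)
  have hseq_sub : ∀ (σ : ℕ → Fin N) (n : ℕ) (S : Set X),
      seqComp f σ n '' S ⊆ F^[n] S := by
    intro σ n S
    rw [iterate_hutch_eq f hN]
    exact Set.subset_iUnion (fun τ => seqComp f τ n '' S) σ
  have hPiA : ∀ σ : ℕ → Fin N, PiMap f σ ⊆ A := by
    intro σ x hx
    rw [hA, Set.mem_iInter]
    intro k
    cases k with
    | zero => exact mem_univ x
    | succ k =>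
      exact hseq_sub σ (k+1) univ (Set.mem_iInter.1 hx k)
  -- every point of a fixed set eventually, and PiMap points lie in every fixed set
  have hPi_mem : ∀ (σ : ℕ → Fin N) (x : X), x ∈ PiMap f σ →
      ∀ B : Set X, B.Nonempty → IsCompact B → F B = B → x ∈ B := by
    intro σ x hx B hBne hBc hBfix
    obtain ⟨p, hp⟩ := hpf σ
    have hxp : x = p := by rw [hp] at hx; exact hx
    have hFB : ∀ k, F^[k] B = B := by
      intro k
      induction k with
      | zero => rfl
      | succ k ih => rw [Function.iterate_succ_apply', ih, hBfix]
    rw [← hBc.isClosed.closure_eq]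
    rw [mem_closure_iff]
    intro U hU hxU
    -- find k with seqComp f σ (k+1) '' univ ⊆ U
    have hk : ∃ k, seqComp f σ (k+1) '' univ ⊆ U := by
      by_contra h
      push_neg at h
      have hne : ∀ k, ((seqComp f σ (k+1) '' univ) \ U).Nonempty := by
        intro k
        rw [Set.diff_nonempty]
        exact fun hsub => h k hsub
      have := IsCompact.nonempty_iInter_of_sequence_nonempty_isCompact_isClosed
        (fun k => (seqComp f σ (k+1) '' univ) \ U)
        (fun k => Set.diff_subset_diff_left (hseq_anti σ (k+1)))
        hne ((hseq_compact σ 1).diff hU)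
        (fun k => ((hseq_compact σ (k+1)).isClosed).sdiff hU)
      obtain ⟨y, hy⟩ := this
      have hyPi : y ∈ PiMap f σ := by
        rw [PiMap, Set.mem_iInter]
        exact fun k => (Set.mem_iInter.1 hy k).1
      have hyU : y ∉ U := (Set.mem_iInter.1 hy 0).2
      rw [hp] at hyPi
      exact hyU (by rw [hyPi, ← hxp]; exact hxU)
    obtain ⟨k, hk⟩ := hk
    obtain ⟨b, hb⟩ := hBne
    refine ⟨seqComp f σ (k+1) b, hk ⟨b, mem_univ b, rfl⟩, ?_⟩
    have : seqComp f σ (k+1) b ∈ seqComp f σ (k+1) '' B := ⟨b, hb, rfl⟩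
    have h2 := hseq_sub σ (k+1) B this
    rwa [hFB (k+1)] at h2
  -- every point of A is a PiMap point
  have hmem_sig : ∀ x ∈ A, ∃ σ : ℕ → Fin N, x ∈ PiMap f σ := by
    intro x hx
    set C : ℕ → Set (ℕ → Fin N) := fun k => {σ | x ∈ seqComp f σ (k+1) '' univ} with hC
    have hCclosed : ∀ k, IsClosed (C k) := by
      intro k
      have he : Continuous (fun σ : ℕ → Fin N => fun i : Fin (k+1) => σ i) :=
        continuous_pi fun i => continuous_apply (i : ℕ)
      have hCeq : C k = (fun σ : ℕ → Fin N => fun i : Fin (k+1) => σ i) ⁻¹'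
          ((fun σ : ℕ → Fin N => fun i : Fin (k+1) => σ i) '' C k) := by
        apply Set.Subset.antisymm (Set.subset_preimage_image _ _)
        rintro σ ⟨τ, hτ, hστ⟩
        have hcongr : seqComp f σ (k+1) = seqComp f τ (k+1) := by
          apply seqComp_congr
          intro i hi
          have := congrFun hστ ⟨i, hi⟩
          exact this.symm
        show x ∈ seqComp f σ (k+1) '' univ
        rw [hcongr]
        exact hτ
      rw [hCeq]
      exact (isClosed_discrete _).preimage he
    have hCne : ∀ k, (C k).Nonempty := by
      intro k
      have hxk : x ∈ F^[k+1] univ := Set.mem_iInter.1 hx (k+1)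
      rw [iterate_hutch_eq f hN] at hxk
      obtain ⟨s, ⟨σ, rfl⟩, hs⟩ := hxk
      exact ⟨σ, hs⟩
    have hCanti : ∀ k, C (k+1) ⊆ C k := fun k σ hσ => hseq_anti σ (k+1) hσ
    have := IsCompact.nonempty_iInter_of_sequence_nonempty_isCompact_isClosed
      C hCanti hCne ((hCclosed 0).isCompact) hCclosed
    obtain ⟨σ, hσ⟩ := this
    refine ⟨σ, ?_⟩
    rw [PiMap, Set.mem_iInter]
    exact fun k => Set.mem_iInter.1 hσ k
  have hAcompact : IsCompact A :=
    (isClosed_iInter fun k => (hKcompact k).isClosed).isCompact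
  have hAne : A.Nonempty := by
    obtain ⟨p, hp⟩ := hpf (fun _ => ⟨0, hN⟩)
    exact ⟨p, hPiA _ (by rw [hp]; rfl)⟩
  have hAfix : F A = A := by
    apply Set.Subset.antisymm
    · intro y hy
      rw [hA, Set.mem_iInter]
      intro k
      cases k with
      | zero => exact mem_univ y
      | succ k =>
        rw [Function.iterate_succ_apply']
        exact hFmono (Set.iInter_subset (fun k => F^[k] univ) k) hy
    · intro x hx
      obtain ⟨σ, hσ⟩ := hmem_sig x hx
      obtain ⟨p, hp⟩ := hpf σ
      have hxp : x = p := by rw [hp] at hσ; exact hσ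
      set σ' : ℕ → Fin N := fun n => σ (n+1) with hσ'
      obtain ⟨q, hq⟩ := hpf σ'
      have hqA : q ∈ A := hPiA σ' (by rw [hq]; rfl)
      have hfq : f (σ 0) q ∈ PiMap f σ := by
        rw [PiMap, Set.mem_iInter]
        intro k
        have hqk : q ∈ seqComp f σ' k '' univ := by
          cases k with
          | zero => exact ⟨q, mem_univ q, rfl⟩
          | succ k => exact Set.mem_iInter.1 (by rw [hq]; rfl : q ∈ PiMap f σ') k
        rw [seqComp_shift, Set.image_comp]
        exact ⟨q, hqk, rfl⟩
      rw [hp] at hfq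
      have : x = f (σ 0) q := by rw [hxp, hfq]
      rw [this]
      exact Set.mem_iUnion.2 ⟨σ 0, q, hqA, rfl⟩
  refine ⟨A, ⟨⟨hAne, hAcompact⟩, hAfix⟩, ?_⟩
  rintro B ⟨⟨hBne, hBc⟩, hBfix⟩
  apply Set.Subset.antisymm
  · -- B ⊆ A
    intro b hb
    rw [hA, Set.mem_iInter]
    intro k
    have hFB : ∀ k, F^[k] B = B := by
      intro k
      induction k with
      | zero => rfl
      | succ k ih => rw [Function.iterate_succ_apply', ih]; exact hBfix
    have : F^[k] B ⊆ F^[k] univ := hFmono.iterate k (subset_univ B)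
    exact this (by rw [hFB k]; exact hb)
  · -- A ⊆ B
    intro x hx
    obtain ⟨σ, hσ⟩ := hmem_sig x hx
    exact hPi_mem σ x hσ B hBne hBc hBfix
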